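/- arXiv:0812.0906 — 2 statements merged into one kernel-verified Lean document; each statement's English description precedes it below -/
import Mathlib

section
/- The function (x₁,…,x_N) ↦ √(∑_{i<j} xᵢxⱼ) is super-additive on nonnegative N-tuples: √(e₂(x+y)) ≥ √(e₂(x)) + √(e₂(y)). -/
open Finset

lemma pair_sum_eq (N : ℕ) (f g : Fin N → ℝ) :
    ∑ p ∈ Finset.univ.filter (fun p : Fin N × Fin N => p.1 < p.2),
      (f p.1 * g p.2 + f p.2 * g p.1)
      = (∑ i, f i) * (∑ i, g i) - ∑ i, f i * g i := by
  have h1 : (∑ i, f i) * (∑ i, g i)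
      = ∑ p : Fin N × Fin N, f p.1 * g p.2 := by
    rw [Finset.sum_mul_sum]
    exact (Fintype.sum_prod_type (f := fun p : Fin N × Fin N => f p.1 * g p.2)).symm
  have h2 : ∑ p : Fin N × Fin N, f p.1 * g p.2
      = ∑ p ∈ Finset.univ.filter (fun p : Fin N × Fin N => p.1 < p.2), f p.1 * g p.2
      + ∑ p ∈ Finset.univ.filter (fun p : Fin N × Fin N => ¬ p.1 < p.2), f p.1 * g p.2 := by
    rw [Finset.sum_filter_add_sum_filter_not]
  have h3 : ∑ p ∈ Finset.univ.filter (fun p : Fin N × Fin N => ¬ p.1 < p.2), f p.1 * g p.2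
      = ∑ p ∈ Finset.univ.filter (fun p : Fin N × Fin N => p.1 = p.2), f p.1 * g p.2
      + ∑ p ∈ Finset.univ.filter (fun p : Fin N × Fin N => p.2 < p.1), f p.1 * g p.2 := by
    rw [← Finset.sum_filter_add_sum_filter_not
      (Finset.univ.filter (fun p : Fin N × Fin N => ¬ p.1 < p.2))
      (fun p : Fin N × Fin N => p.1 = p.2)]
    congr 1
    · apply Finset.sum_congr _ (fun _ _ => rfl)
      rw [Finset.filter_filter]
      apply Finset.filter_congr
      intro p _
      constructor
      · exact fun h => h.2
      · intro h
        refine ⟨?_, h⟩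
        rw [h]
        exact lt_irrefl _
    · apply Finset.sum_congr _ (fun _ _ => rfl)
      rw [Finset.filter_filter]
      apply Finset.filter_congr
      intro p _
      constructor
      · intro h
        rcases lt_trichotomy p.1 p.2 with h' | h' | h'
        · exact absurd h' h.1
        · exact absurd h' h.2
        · exact h'
      · intro h
        exact ⟨fun h' => absurd h (not_lt_of_gt h'), fun h' => absurd h (h' ▸ lt_irrefl _)⟩
  have h4 : ∑ p ∈ Finset.univ.filter (fun p : Fin N × Fin N => p.1 = p.2), f p.1 * g p.2
      = ∑ i, f i * g i := by
    apply Finset.sum_nbij' Prod.fst (fun i => (i, i))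
    · intros; simp
    · intros; simp
    · intro p hp
      simp only [Finset.mem_filter, Finset.mem_univ, true_and] at hp
      ext <;> simp [hp]
    · intros; rfl
    · intro p hp
      simp only [Finset.mem_filter, Finset.mem_univ, true_and] at hp
      rw [hp]
  have h5 : ∑ p ∈ Finset.univ.filter (fun p : Fin N × Fin N => p.2 < p.1), f p.1 * g p.2
      = ∑ p ∈ Finset.univ.filter (fun p : Fin N × Fin N => p.1 < p.2), f p.2 * g p.1 := by
    apply Finset.sum_nbij' Prod.swap Prod.swap
    · intro p hp; simp only [Finset.mem_filter, Finset.mem_univ, true_and] at *; exact hp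
    · intro p hp; simp only [Finset.mem_filter, Finset.mem_univ, true_and] at *; exact hp
    · intros; rfl
    · intros; rfl
    · intros; rfl
  rw [Finset.sum_add_distrib, h1, h2, h3, h4, h5]
  ring

theorem sqrt_e2_superadditive (N : ℕ) (x y : Fin N → ℝ)
    (hx : ∀ i, 0 ≤ x i) (hy : ∀ i, 0 ≤ y i) :
    Real.sqrt (∑ p ∈ Finset.univ.filter
        (fun p : Fin N × Fin N => p.1 < p.2), x p.1 * x p.2) +
    Real.sqrt (∑ p ∈ Finset.univ.filter
        (fun p : Fin N × Fin N => p.1 < p.2), y p.1 * y p.2) ≤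
    Real.sqrt (∑ p ∈ Finset.univ.filter
        (fun p : Fin N × Fin N => p.1 < p.2), (x p.1 + y p.1) * (x p.2 + y p.2)) := by
  set Sx := ∑ i, x i with hSx
  set Sy := ∑ i, y i with hSy
  set a := ∑ p ∈ Finset.univ.filter (fun p : Fin N × Fin N => p.1 < p.2), x p.1 * x p.2 with hadef
  set b := ∑ p ∈ Finset.univ.filter (fun p : Fin N × Fin N => p.1 < p.2), y p.1 * y p.2 with hbdef
  set c := ∑ p ∈ Finset.univ.filter (fun p : Fin N × Fin N => p.1 < p.2),
      (x p.1 * y p.2 + x p.2 * y p.1) with hcdef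
  clear_value Sx Sy a b c
  have hsplit : ∑ p ∈ Finset.univ.filter
      (fun p : Fin N × Fin N => p.1 < p.2), (x p.1 + y p.1) * (x p.2 + y p.2)
      = a + b + c := by
    rw [hadef, hbdef, hcdef, ← Finset.sum_add_distrib, ← Finset.sum_add_distrib]
    exact Finset.sum_congr rfl (fun p _ => by ring)
  have ha : 0 ≤ a := by
    rw [hadef]; exact Finset.sum_nonneg fun p _ => mul_nonneg (hx _) (hx _)
  have hb : 0 ≤ b := by
    rw [hbdef]; exact Finset.sum_nonneg fun p _ => mul_nonneg (hy _) (hy _)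
  have hc : 0 ≤ c := by
    rw [hcdef]
    exact Finset.sum_nonneg fun p _ =>
      add_nonneg (mul_nonneg (hx _) (hy _)) (mul_nonneg (hx _) (hy _))
  have key : 4 * (a * b) ≤ c ^ 2 := by
    have h2a : 2 * a = Sx * Sx - ∑ i, x i * x i := by
      rw [hadef, hSx, ← pair_sum_eq N x x, Finset.mul_sum]
      exact Finset.sum_congr rfl (fun p _ => by ring)
    have h2b : 2 * b = Sy * Sy - ∑ i, y i * y i := by
      rw [hbdef, hSy, ← pair_sum_eq N y y, Finset.mul_sum]
      exact Finset.sum_congr rfl (fun p _ => by ring)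
    have hcc : c = Sx * Sy - ∑ i, x i * y i := by
      rw [hcdef, hSx, hSy, ← pair_sum_eq N x y]
    have hSx0 : (0:ℝ) ≤ Sx := by
      rw [hSx]; exact Finset.sum_nonneg (fun i _ => hx i)
    have hSy0 : (0:ℝ) ≤ Sy := by
      rw [hSy]; exact Finset.sum_nonneg (fun i _ => hy i)
    rcases eq_or_lt_of_le hSx0 with hx0 | hx0
    · rw [hSx] at hx0
      have hall : ∀ i, x i = 0 := by
        intro i
        exact (Finset.sum_eq_zero_iff_of_nonneg (fun i _ => hx i)).1 hx0.symm i
          (Finset.mem_univ i)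
      have ha0 : a = 0 := by
        rw [hadef]
        exact Finset.sum_eq_zero fun p _ => by rw [hall p.1]; ring
      rw [ha0]
      nlinarith [sq_nonneg c]
    rcases eq_or_lt_of_le hSy0 with hy0 | hy0
    · rw [hSy] at hy0
      have hall : ∀ i, y i = 0 := by
        intro i
        exact (Finset.sum_eq_zero_iff_of_nonneg (fun i _ => hy i)).1 hy0.symm i
          (Finset.mem_univ i)
      have hb0 : b = 0 := by
        rw [hbdef]
        exact Finset.sum_eq_zero fun p _ => by rw [hall p.1]; ring
      rw [hb0]
      nlinarith [sq_nonneg c]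
    have hz : (0:ℝ) ≤ ∑ i, (Sy * x i - Sx * y i) * (Sy * x i - Sx * y i) :=
      Finset.sum_nonneg fun i _ => mul_self_nonneg _
    have hexp : ∑ i, (Sy * x i - Sx * y i) * (Sy * x i - Sx * y i)
        = Sy ^ 2 * (∑ i, x i * x i) - 2 * Sx * Sy * (∑ i, x i * y i)
          + Sx ^ 2 * (∑ i, y i * y i) := by
      simp only [Finset.mul_sum, ← Finset.sum_sub_distrib, ← Finset.sum_add_distrib]
      exact Finset.sum_congr rfl (fun i _ => by ring)
    have hmain : Sy ^ 2 * (2 * a) + Sx ^ 2 * (2 * b) ≤ 2 * Sx * Sy * c := by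
      rw [hexp] at hz
      rw [h2a, h2b, hcc]
      nlinarith [hz]
    have hu : 0 ≤ Sy ^ 2 * (2 * a) + Sx ^ 2 * (2 * b) := by positivity
    have hsq : (Sy ^ 2 * (2 * a) + Sx ^ 2 * (2 * b)) ^ 2 ≤ (2 * Sx * Sy * c) ^ 2 := by
      have := mul_self_le_mul_self hu hmain
      nlinarith [this]
    have hamgm : 16 * (Sx * Sy) ^ 2 * (a * b)
        ≤ (Sy ^ 2 * (2 * a) + Sx ^ 2 * (2 * b)) ^ 2 := by
      nlinarith [sq_nonneg (Sy ^ 2 * (2 * a) - Sx ^ 2 * (2 * b))]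
    have hm2 : 0 < (Sx * Sy) ^ 2 := by positivity
    have h16 : 16 * (Sx * Sy) ^ 2 * (a * b) ≤ (2 * Sx * Sy * c) ^ 2 := le_trans hamgm hsq
    have h' : (Sx * Sy) ^ 2 * (4 * (a * b)) ≤ (Sx * Sy) ^ 2 * c ^ 2 := by
      have e1 : 16 * (Sx * Sy) ^ 2 * (a * b) = 4 * ((Sx * Sy) ^ 2 * (4 * (a * b))) := by ring
      have e2 : (2 * Sx * Sy * c) ^ 2 = 4 * ((Sx * Sy) ^ 2 * c ^ 2) := by ring
      rw [e1, e2] at h16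
      linarith
    exact le_of_mul_le_mul_left h' hm2
  rw [hsplit]
  have h2ab : 2 * Real.sqrt (a * b) ≤ c := by
    have h1 : Real.sqrt (a * b) ≤ Real.sqrt (c ^ 2 / 4) := by
      apply Real.sqrt_le_sqrt; linarith
    have h2 : Real.sqrt (c ^ 2 / 4) = c / 2 := by
      rw [show c ^ 2 / 4 = (c / 2) ^ 2 by ring, Real.sqrt_sq (by linarith)]
    rw [h2] at h1; linarith
  have hsum : (Real.sqrt a + Real.sqrt b) ^ 2 ≤ a + b + c := by
    have : (Real.sqrt a + Real.sqrt b) ^ 2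
        = a + b + 2 * Real.sqrt (a * b) := by
      rw [add_sq, Real.sq_sqrt ha, Real.sq_sqrt hb, Real.sqrt_mul ha]
      ring
    linarith
  calc Real.sqrt a + Real.sqrt b
      = Real.sqrt ((Real.sqrt a + Real.sqrt b) ^ 2) := by
        rw [Real.sqrt_sq (by positivity)]
    _ ≤ Real.sqrt (a + b + c) := Real.sqrt_le_sqrt hsum
end

section
/- For a density matrix σ on an N-dimensional space (N ≥ 2), S(σ) ≤ log(N)·√(N/(N-1))·√(1 - Tr σ²). -/
noncomputable def gfun (t : ℝ) : ℝ := t * Real.log t ^ 2 / (1 - t)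
noncomputable def gfun' (t : ℝ) : ℝ :=
  (Real.log t ^ 2 + 2 * Real.log t * (1 - t)) / (1 - t) ^ 2
noncomputable def gfun'' (t : ℝ) : ℝ :=
  2 * (1 - t) * ((Real.log t - (t - 1)) * (t * Real.log t - (t - 1))) / (t * (1 - t) ^ 4)

lemma hasDerivAt_gfun {t : ℝ} (ht0 : 0 < t) (ht1 : t < 1) :
    HasDerivAt gfun (gfun' t) t := by
  have hne : (1 : ℝ) - t ≠ 0 := by linarith
  have hnum : HasDerivAt (fun x : ℝ => x * Real.log x ^ 2)
      (1 * Real.log t ^ 2 + t * (2 * Real.log t ^ 1 * t⁻¹)) t :=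
    (hasDerivAt_id t).mul ((Real.hasDerivAt_log ht0.ne').pow 2)
  have hden : HasDerivAt (fun x : ℝ => 1 - x) (-1) t := (hasDerivAt_id t).const_sub 1
  have h := hnum.div hden hne
  refine h.congr_deriv ?_
  unfold gfun'
  field_simp
  ring

lemma hasDerivAt_gfun' {t : ℝ} (ht0 : 0 < t) (ht1 : t < 1) :
    HasDerivAt gfun' (gfun'' t) t := by
  have hne : (1 : ℝ) - t ≠ 0 := by linarith
  have hden : HasDerivAt (fun x : ℝ => 1 - x) (-1) t := (hasDerivAt_id t).const_sub 1
  have hlog := Real.hasDerivAt_log ht0.ne'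
  have hnum : HasDerivAt (fun x : ℝ => Real.log x ^ 2 + 2 * Real.log x * (1 - x))
      (2 * Real.log t ^ 1 * t⁻¹ + ((2 * t⁻¹) * (1 - t) + (2 * Real.log t) * (-1))) t :=
    (hlog.pow 2).add ((hlog.const_mul 2).mul hden)
  have hden2 : HasDerivAt (fun x : ℝ => (1 - x) ^ 2) (2 * (1 - t) ^ 1 * (-1)) t := hden.pow 2
  have h := hnum.div hden2 (pow_ne_zero 2 hne)
  refine h.congr_deriv ?_
  unfold gfun''
  field_simp
  ring

lemma gfun''_nonpos {t : ℝ} (ht0 : 0 < t) (ht1 : t < 1) : gfun'' t ≤ 0 := by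
  have h1 : Real.log t ≤ t - 1 := Real.log_le_sub_one_of_pos ht0
  have h2 : t - 1 ≤ t * Real.log t := by
    have := Real.log_le_sub_one_of_pos (inv_pos.mpr ht0)
    rw [Real.log_inv] at this
    have h3 : t * t⁻¹ = 1 := mul_inv_cancel₀ ht0.ne'
    nlinarith [mul_le_mul_of_nonneg_left this ht0.le]
  apply div_nonpos_of_nonpos_of_nonneg
  · have : (Real.log t - (t - 1)) * (t * Real.log t - (t - 1)) ≤ 0 :=
      mul_nonpos_of_nonpos_of_nonneg (by linarith) (by linarith)
    nlinarith
  · positivity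

lemma gfun_concaveOn : ConcaveOn ℝ (Set.Ico (0:ℝ) 1) gfun := by
  have hint : interior (Set.Ico (0:ℝ) 1) = Set.Ioo 0 1 := interior_Ico
  apply concaveOn_of_hasDerivWithinAt2_nonpos (f' := gfun') (f'' := gfun'') (convex_Ico 0 1)
  · -- continuity
    intro t ht
    rcases eq_or_lt_of_le ht.1 with h0 | h0
    · -- t = 0
      subst h0
      have hval : gfun 0 = 0 := by simp [gfun]
      rw [ContinuousWithinAt, hval]
      have hev1 : ∀ᶠ x in nhdsWithin 0 (Set.Ico (0:ℝ) 1), 0 ≤ gfun x := by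
        filter_upwards [self_mem_nhdsWithin] with x hx
        have hx0 : 0 ≤ x := hx.1
        have hx1 : x < 1 := hx.2
        unfold gfun
        apply div_nonneg
        · positivity
        · linarith
      have hev2 : ∀ᶠ x in nhdsWithin 0 (Set.Ico (0:ℝ) 1), gfun x ≤ 32 * Real.sqrt x := by
        have hhalf : ∀ᶠ x in nhdsWithin 0 (Set.Ico (0:ℝ) 1), x < 1/2 :=
          (eventually_lt_nhds (by norm_num : (0:ℝ) < 1/2)).filter_mono nhdsWithin_le_nhds
        filter_upwards [self_mem_nhdsWithin, hhalf] with x hx hx2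
        rcases eq_or_lt_of_le hx.1 with h0 | h0
        · simp [← h0, gfun]
        · have hlogsq : Real.log x ^ 2 ≤ 16 / Real.sqrt x := by
            have hx1 : (1:ℝ) ≤ x⁻¹ := by
              rw [le_inv_comm₀] <;> nlinarith
            have hlx : Real.log x⁻¹ ≤ 4 * Real.sqrt (Real.sqrt x⁻¹) := by
              have h4 : Real.log x⁻¹ = 4 * Real.log (Real.sqrt (Real.sqrt x⁻¹)) := by
                rw [Real.log_sqrt (Real.sqrt_nonneg _), Real.log_sqrt (by positivity)]
                ring
              have := Real.log_le_sub_one_of_pos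
                (show 0 < Real.sqrt (Real.sqrt x⁻¹) by positivity)
              nlinarith
            have hlogx : Real.log x = - Real.log x⁻¹ := by rw [Real.log_inv]; ring
            have hnn : 0 ≤ Real.log x⁻¹ := Real.log_nonneg hx1
            have hsq : Real.log x ^ 2 ≤ 16 * Real.sqrt (Real.sqrt x⁻¹) ^ 2 := by
              rw [hlogx]
              nlinarith [Real.sqrt_nonneg (Real.sqrt x⁻¹)]
            have : Real.sqrt (Real.sqrt x⁻¹) ^ 2 = Real.sqrt x⁻¹ :=
              Real.sq_sqrt (Real.sqrt_nonneg _)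
            rw [this, Real.sqrt_inv] at hsq
            rw [div_eq_mul_inv]
            linarith [hsq]
          unfold gfun
          rw [div_le_iff₀ (by linarith : (0:ℝ) < 1 - x)]
          have hs0 : 0 < Real.sqrt x := Real.sqrt_pos.mpr h0
          have h16 : x * Real.log x ^ 2 ≤ 16 * Real.sqrt x := by
            have := mul_le_mul_of_nonneg_left hlogsq (le_of_lt h0)
            have hxd : x * (16 / Real.sqrt x) = 16 * Real.sqrt x := by
              rw [mul_div_assoc']
              rw [mul_comm x 16, mul_div_assoc, Real.div_sqrt]
            linarith [this, hxd.le, hxd.ge]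
          nlinarith [Real.sqrt_nonneg x]
      have hlim : Filter.Tendsto (fun x : ℝ => 32 * Real.sqrt x)
          (nhdsWithin 0 (Set.Ico (0:ℝ) 1)) (nhds 0) := by
        have : Filter.Tendsto (fun x : ℝ => 32 * Real.sqrt x) (nhds 0) (nhds 0) := by
          have h := (Real.continuous_sqrt.tendsto 0).const_mul (32:ℝ)
          simpa using h
        exact this.mono_left nhdsWithin_le_nhds
      exact squeeze_zero' hev1 hev2 hlim
    · -- 0 < t
      apply ContinuousAt.continuousWithinAt
      have hne : (1:ℝ) - t ≠ 0 := by have := ht.2; intro h; linarith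
      exact (((continuousAt_id).mul ((Real.continuousAt_log h0.ne').pow 2)).div
        (continuousAt_const.sub continuousAt_id) hne)
  · intro t ht
    rw [hint] at ht
    exact (hasDerivAt_gfun ht.1 ht.2).hasDerivWithinAt
  · intro t ht
    rw [hint] at ht
    exact (hasDerivAt_gfun' ht.1 ht.2).hasDerivWithinAt
  · intro t ht
    rw [hint] at ht
    exact gfun''_nonpos ht.1 ht.2

lemma entropy_sum_le (N : ℕ) (hN : 2 ≤ N) (p : Fin N → ℝ) (h0 : ∀ i, 0 ≤ p i)
    (h1 : ∑ i, p i = 1) :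
    ∑ i, (-(p i) * Real.log (p i)) ≤
      Real.log N * Real.sqrt ((N : ℝ) / ((N : ℝ) - 1)) * Real.sqrt (1 - ∑ i, (p i) ^ 2) := by
  have hN1 : (1 : ℝ) ≤ (N : ℝ) := by exact_mod_cast le_trans one_le_two hN
  have hN1' : (1 : ℝ) < (N : ℝ) := by exact_mod_cast lt_of_lt_of_le one_lt_two hN
  have hNpos : (0 : ℝ) < (N : ℝ) := by linarith
  have hlogN : 0 ≤ Real.log N := Real.log_nonneg hN1
  have hple : ∀ i, p i ≤ 1 := by
    intro i
    have := Finset.single_le_sum (f := p) (fun j _ => h0 j) (Finset.mem_univ i)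
    rwa [h1] at this
  by_cases hone : ∃ i, p i = 1
  · obtain ⟨i, hi⟩ := hone
    have hz : ∀ j, j ≠ i → p j = 0 := by
      intro j hj
      have hsum : ∑ k ∈ Finset.univ.erase i, p k = 0 := by
        have := Finset.add_sum_erase Finset.univ p (Finset.mem_univ i)
        rw [h1, hi] at this
        linarith
      have := (Finset.sum_eq_zero_iff_of_nonneg (fun k _ => h0 k)).mp hsum j
        (Finset.mem_erase.mpr ⟨hj, Finset.mem_univ j⟩)
      exact this
    have hLHS : ∑ i, (-(p i) * Real.log (p i)) = 0 := by
      apply Finset.sum_eq_zero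
      intro j _
      by_cases hji : j = i
      · rw [hji, hi]; simp
      · rw [hz j hji]; simp
    rw [hLHS]
    apply mul_nonneg (mul_nonneg hlogN (Real.sqrt_nonneg _)) (Real.sqrt_nonneg _)
  · push_neg at hone
    have hlt : ∀ i, p i < 1 := fun i => lt_of_le_of_ne (hple i) (hone i)
    have hgnn : ∀ i, 0 ≤ gfun (p i) := by
      intro i
      unfold gfun
      apply div_nonneg
      · exact mul_nonneg (h0 i) (sq_nonneg _)
      · linarith [hlt i]
    -- rewrite each term
    have hterm : ∀ i, -(p i) * Real.log (p i) =
        Real.sqrt (p i * (1 - p i)) * Real.sqrt (gfun (p i)) := by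
      intro i
      rcases eq_or_lt_of_le (h0 i) with h | h
      · rw [← h]; simp [gfun]
      · have hne : (1 : ℝ) - p i ≠ 0 := by linarith [hlt i]
        rw [← Real.sqrt_mul (by nlinarith [hlt i] : 0 ≤ p i * (1 - p i))]
        have heq : p i * (1 - p i) * gfun (p i) = (-(p i) * Real.log (p i)) ^ 2 := by
          unfold gfun
          field_simp
        rw [heq, Real.sqrt_sq]
        have hlognp : Real.log (p i) ≤ 0 := Real.log_nonpos (h0 i) (hple i)
        nlinarith
    rw [Finset.sum_congr rfl (fun i _ => hterm i)]
    -- Cauchy-Schwarz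
    have hCS : ∑ i, Real.sqrt (p i * (1 - p i)) * Real.sqrt (gfun (p i)) ≤
        Real.sqrt (∑ i, p i * (1 - p i)) * Real.sqrt (∑ i, gfun (p i)) :=
      Real.sum_sqrt_mul_sqrt_le Finset.univ
        (fun i => mul_nonneg (h0 i) (by linarith [hlt i])) hgnn
    refine le_trans hCS ?_
    -- Jensen
    have hJ : ∑ i, gfun (p i) ≤ (N : ℝ) * (Real.log N ^ 2 / ((N : ℝ) - 1)) := by
      have hmem : ∀ i ∈ Finset.univ, p i ∈ Set.Ico (0:ℝ) 1 := fun i _ => ⟨h0 i, hlt i⟩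
      have hw : ∑ _i : Fin N, (N : ℝ)⁻¹ = 1 := by
        rw [Finset.sum_const, Finset.card_univ, Fintype.card_fin, nsmul_eq_mul,
          mul_inv_cancel₀ hNpos.ne']
      have hJen := gfun_concaveOn.le_map_sum (t := Finset.univ)
        (w := fun _ => (N : ℝ)⁻¹) (p := p)
        (fun i _ => by positivity) hw hmem
      have hmean : ∑ i, (N : ℝ)⁻¹ • p i = (N : ℝ)⁻¹ := by
        rw [← Finset.smul_sum, h1, smul_eq_mul, mul_one]
      rw [hmean] at hJen
      have hval : gfun ((N : ℝ)⁻¹) = Real.log N ^ 2 / ((N : ℝ) - 1) := by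
        unfold gfun
        rw [Real.log_inv]
        field_simp
      rw [hval] at hJen
      have : ∑ i, (N : ℝ)⁻¹ • gfun (p i) = (N : ℝ)⁻¹ * ∑ i, gfun (p i) := by
        rw [← Finset.smul_sum]; rfl
      rw [this] at hJen
      calc ∑ i, gfun (p i) = (N : ℝ) * ((N : ℝ)⁻¹ * ∑ i, gfun (p i)) := by
            field_simp
        _ ≤ (N : ℝ) * (Real.log N ^ 2 / ((N : ℝ) - 1)) := by
            apply mul_le_mul_of_nonneg_left hJen hNpos.le
    have hsum1 : ∑ i, p i * (1 - p i) = 1 - ∑ i, (p i) ^ 2 := by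
      calc ∑ i, p i * (1 - p i) = ∑ i, (p i - p i ^ 2) := by
            apply Finset.sum_congr rfl; intro i _; ring
        _ = (∑ i, p i) - ∑ i, (p i) ^ 2 := Finset.sum_sub_distrib _ _
        _ = 1 - ∑ i, (p i) ^ 2 := by rw [h1]
    rw [hsum1]
    have hmono := Real.sqrt_le_sqrt hJ
    have hC : Real.sqrt ((N : ℝ) * (Real.log N ^ 2 / ((N : ℝ) - 1))) =
        Real.log N * Real.sqrt ((N : ℝ) / ((N : ℝ) - 1)) := by
      rw [show (N : ℝ) * (Real.log N ^ 2 / ((N : ℝ) - 1)) =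
          Real.log N ^ 2 * ((N : ℝ) / ((N : ℝ) - 1)) by ring]
      rw [Real.sqrt_mul (sq_nonneg _), Real.sqrt_sq hlogN]
    calc Real.sqrt (1 - ∑ i, (p i) ^ 2) * Real.sqrt (∑ i, gfun (p i))
        ≤ Real.sqrt (1 - ∑ i, (p i) ^ 2) *
          Real.sqrt ((N : ℝ) * (Real.log N ^ 2 / ((N : ℝ) - 1))) := by
          apply mul_le_mul_of_nonneg_left hmono (Real.sqrt_nonneg _)
      _ = Real.log N * Real.sqrt ((N : ℝ) / ((N : ℝ) - 1)) *
          Real.sqrt (1 - ∑ i, (p i) ^ 2) := by rw [hC]; ring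

open ComplexOrder

theorem entropy_le_purity_bound (N : ℕ) (hN : 2 ≤ N)
    (σ : Matrix (Fin N) (Fin N) ℂ) (hσ : σ.PosSemidef) (htr : σ.trace = 1) :
    ∑ i, (-(hσ.1.eigenvalues i) * Real.log (hσ.1.eigenvalues i)) ≤
      Real.log N * Real.sqrt (N / (N - 1)) *
        Real.sqrt (1 - (σ * σ).trace.re) := by
  classical
  have hnn : ∀ i, 0 ≤ hσ.1.eigenvalues i := fun i => hσ.eigenvalues_nonneg i
  set U : Matrix (Fin N) (Fin N) ℂ := ↑(hσ.1.eigenvectorUnitary) with hU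
  set D : Matrix (Fin N) (Fin N) ℂ :=
    Matrix.diagonal (RCLike.ofReal ∘ hσ.1.eigenvalues) with hD
  have h1 : star U * U = 1 := (Matrix.mem_unitaryGroup_iff').mp (hσ.1.eigenvectorUnitary).2
  have hspec : σ = U * D * star U := hσ.1.spectral_theorem
  have htraceD : σ.trace = D.trace := by
    conv_lhs => rw [hspec]
    rw [Matrix.trace_mul_cycle, h1, one_mul]
  have hDtrace : D.trace = ((∑ i, hσ.1.eigenvalues i : ℝ) : ℂ) := by
    rw [hD, Matrix.trace_diagonal]
    push_cast
    rfl
  have hsum : ∑ i, hσ.1.eigenvalues i = 1 := by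
    have h2 : ((∑ i, hσ.1.eigenvalues i : ℝ) : ℂ) = 1 := by
      rw [← hDtrace, ← htraceD, htr]
    exact_mod_cast h2
  have hkey : σ * σ = U * (D * D) * star U := by
    rw [hspec]
    calc U * D * star U * (U * D * star U)
        = U * D * ((star U * U) * (D * star U)) := by simp only [mul_assoc]
      _ = U * (D * D) * star U := by rw [h1, one_mul]; simp only [mul_assoc]
  have hDD : (D * D).trace = ((∑ i, (hσ.1.eigenvalues i) ^ 2 : ℝ) : ℂ) := by
    rw [hD, Matrix.diagonal_mul_diagonal, Matrix.trace_diagonal]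
    push_cast
    apply Finset.sum_congr rfl
    intro i _
    simp [Function.comp, pow_two]
  have hre : (σ * σ).trace.re = ∑ i, (hσ.1.eigenvalues i) ^ 2 := by
    rw [hkey, Matrix.trace_mul_cycle, h1, one_mul, hDD, Complex.ofReal_re]
  rw [hre]
  exact entropy_sum_le N hN (hσ.1.eigenvalues) hnn hsum
end
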